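/- Let M > 0 and let (λ_n), (α_n) be spectral data in the class Ω_{0,M}. Define f_0(t) := π^{−1/2}, f_n(t) := (2/π)^{1/2}cos(nt) for n ≥ 1, and g_n(t) := α_n^{−1/2}cos(ρ_n t) for n ∈ ℕ₀. Then for every integer J ≥ 1: Ω_J := ( Σ_{n=J+1}^∞ ‖g_n − f_n‖²_{L²([0,π])} )^{1/2} ≤ C_Ω / J, where C_Ω := M·π·cosh(Mπ)·√( (3/2)·(1 + (2π)²M² + (2+πM)²) ). -/

import Mathlib

open MeasureTheory
open scoped ENNReal

set_option maxHeartbeats 4000000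

open MeasureTheory
open scoped ENNReal

lemma sinh_le_mul_cosh {x : ℝ} (hx : 0 ≤ x) : Real.sinh x ≤ x * Real.cosh x := by
  have hmono : MonotoneOn (fun y : ℝ => y * Real.cosh y - Real.sinh y) (Set.Ici 0) := by
    apply monotoneOn_of_deriv_nonneg (convex_Ici 0)
    · fun_prop
    · intro y hy
      have hd : HasDerivAt (fun y : ℝ => y * Real.cosh y - Real.sinh y) (y * Real.sinh y) y := by
        have := ((hasDerivAt_id y).mul (Real.hasDerivAt_cosh y)).sub (Real.hasDerivAt_sinh y)
        exact this.congr_deriv (by simp only [id]; ring)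
      exact hd.differentiableAt.differentiableWithinAt
    · intro y hy
      rw [interior_Ici] at hy
      have hd : HasDerivAt (fun y : ℝ => y * Real.cosh y - Real.sinh y) (y * Real.sinh y) y := by
        have := ((hasDerivAt_id y).mul (Real.hasDerivAt_cosh y)).sub (Real.hasDerivAt_sinh y)
        exact this.congr_deriv (by simp only [id]; ring)
      rw [hd.deriv]
      have h1 : 0 ≤ Real.sinh y := Real.sinh_nonneg_iff.2 (le_of_lt hy)
      nlinarith [le_of_lt (Set.mem_Ioi.1 hy)]
  have h0 := hmono (Set.self_mem_Ici) (Set.mem_Ici.2 hx) hx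
  simpa using h0

lemma cosh_sub_one_le {x : ℝ} (hx : 0 ≤ x) : Real.cosh x - 1 ≤ x ^ 2 * Real.cosh x := by
  have hmono : MonotoneOn (fun y : ℝ => y * Real.sinh y - Real.cosh y) (Set.Ici 0) := by
    apply monotoneOn_of_deriv_nonneg (convex_Ici 0)
    · fun_prop
    · intro y hy
      have hd : HasDerivAt (fun y : ℝ => y * Real.sinh y - Real.cosh y) (y * Real.cosh y) y := by
        have := ((hasDerivAt_id y).mul (Real.hasDerivAt_sinh y)).sub (Real.hasDerivAt_cosh y)
        exact this.congr_deriv (by simp only [id]; ring)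
      exact hd.differentiableAt.differentiableWithinAt
    · intro y hy
      rw [interior_Ici] at hy
      have hd : HasDerivAt (fun y : ℝ => y * Real.sinh y - Real.cosh y) (y * Real.cosh y) y := by
        have := ((hasDerivAt_id y).mul (Real.hasDerivAt_sinh y)).sub (Real.hasDerivAt_cosh y)
        exact this.congr_deriv (by simp only [id]; ring)
      rw [hd.deriv]
      have h1 : 0 < Real.cosh y := Real.cosh_pos y
      nlinarith [le_of_lt (Set.mem_Ioi.1 hy)]
  have h0 := hmono (Set.self_mem_Ici) (Set.mem_Ici.2 hx) hx
  simp only [Real.sinh_zero, Real.cosh_zero, mul_zero, zero_mul, zero_sub] at h0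
  have h2 : Real.sinh x ≤ x * Real.cosh x := sinh_le_mul_cosh hx
  nlinarith [Real.cosh_pos x]

lemma complex_cos_re (z : ℂ) : (Complex.cos z).re = Real.cos z.re * Real.cosh z.im := by
  rw [Complex.cos_eq]
  simp [Complex.sub_re, Complex.mul_re, Complex.cos_ofReal_re, Complex.sin_ofReal_re]

lemma complex_sin_re (z : ℂ) : (Complex.sin z).re = Real.sin z.re * Real.cosh z.im := by
  rw [Complex.sin_eq]
  simp [Complex.add_re, Complex.mul_re, Complex.cos_ofReal_re, Complex.sin_ofReal_re]

lemma cosh_sub_one_le' (b : ℝ) : Real.cosh b - 1 ≤ b ^ 2 * Real.cosh b := by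
  have := cosh_sub_one_le (abs_nonneg b)
  rwa [Real.cosh_abs, sq_abs] at this

lemma one_sub_cos_le (a : ℝ) : 1 - Real.cos a ≤ a ^ 2 / 2 := by
  have h1 : Real.cos (a / 2) ^ 2 = 1 / 2 + Real.cos a / 2 := by
    have := Real.cos_sq (a / 2)
    rwa [mul_div_cancel₀ a (two_ne_zero)] at this
  have h2 : Real.sin (a / 2) ^ 2 + Real.cos (a / 2) ^ 2 = 1 := Real.sin_sq_add_cos_sq _
  have h3 : |Real.sin (a / 2)| ≤ |a / 2| := Real.abs_sin_le_abs
  have h4 : Real.sin (a / 2) ^ 2 ≤ (a / 2) ^ 2 := by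
    rw [← sq_abs (Real.sin (a / 2)), ← sq_abs (a / 2)]
    exact pow_le_pow_left₀ (abs_nonneg _) h3 2
  nlinarith

lemma re_cos_abs_le {z : ℂ} {m : ℝ} (h : |z.im| ≤ m) : |(Complex.cos z).re| ≤ Real.cosh m := by
  rw [complex_cos_re, abs_mul, abs_of_pos (Real.cosh_pos z.im)]
  calc |Real.cos z.re| * Real.cosh z.im ≤ 1 * Real.cosh z.im :=
        mul_le_mul_of_nonneg_right (Real.abs_cos_le_one _) (Real.cosh_pos _).le
    _ = Real.cosh z.im := one_mul _
    _ ≤ Real.cosh m := Real.cosh_le_cosh.2 (by rwa [abs_of_nonneg ((abs_nonneg _).trans h)])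

lemma re_cos_sub_one_abs_le (w : ℂ) : |(Complex.cos w).re - 1| ≤ ‖w‖ ^ 2 * Real.cosh ‖w‖ := by
  rw [complex_cos_re]
  set a := w.re; set b := w.im
  have hsq : a ^ 2 + b ^ 2 = ‖w‖ ^ 2 := by
    rw [Complex.sq_norm, Complex.normSq_apply]; ring
  have hcb : Real.cosh b ≤ Real.cosh ‖w‖ :=
    Real.cosh_le_cosh.2 (by rw [abs_of_nonneg (norm_nonneg w)]; exact Complex.abs_im_le_norm w)
  have h1 : 1 - Real.cos a ≤ a ^ 2 / 2 := one_sub_cos_le a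
  have h2 : Real.cosh b - 1 ≤ b ^ 2 * Real.cosh b := cosh_sub_one_le' b
  have hc1 : Real.cos a ≤ 1 := Real.cos_le_one a
  have hb1 : (1:ℝ) ≤ Real.cosh b := Real.one_le_cosh b
  have hkey : |Real.cos a * Real.cosh b - 1| ≤ (a ^ 2 / 2) * Real.cosh b + (Real.cosh b - 1) := by
    have he0 : Real.cos a * Real.cosh b - 1 =
        (Real.cos a - 1) * Real.cosh b + (Real.cosh b - 1) := by ring
    rw [he0]
    refine (abs_add_le _ _).trans ?_
    have e1 : |(Real.cos a - 1) * Real.cosh b| ≤ (a ^ 2 / 2) * Real.cosh b := by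
      rw [abs_mul, abs_of_pos (Real.cosh_pos b)]
      have he : |Real.cos a - 1| = 1 - Real.cos a := by
        rw [abs_sub_comm, abs_of_nonneg (by linarith)]
      rw [he]
      exact mul_le_mul_of_nonneg_right h1 (Real.cosh_pos b).le
    have e2 : |Real.cosh b - 1| = Real.cosh b - 1 := abs_of_nonneg (by linarith)
    linarith
  refine hkey.trans ?_
  have hw : (0:ℝ) ≤ ‖w‖ := norm_nonneg w
  nlinarith [Real.cosh_pos b, sq_nonneg a, sq_nonneg b]

lemma re_sin_abs_le (w : ℂ) : |(Complex.sin w).re| ≤ ‖w‖ * Real.cosh ‖w‖ := by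
  rw [complex_sin_re, abs_mul, abs_of_pos (Real.cosh_pos w.im)]
  have h1 : |Real.sin w.re| ≤ |w.re| := Real.abs_sin_le_abs
  have h2 : |w.re| ≤ ‖w‖ := Complex.abs_re_le_norm w
  have h3 : Real.cosh w.im ≤ Real.cosh ‖w‖ :=
    Real.cosh_le_cosh.2 (by rw [abs_of_nonneg (norm_nonneg w)]; exact Complex.abs_im_le_norm w)
  exact mul_le_mul (h1.trans h2) h3 (Real.cosh_pos _).le (norm_nonneg w)

/-- For spectral data in the class `Ω_{0,M}`, the tails of the `ℓ²`-distance
between the perturbed cosine family `g_n(t) = α_n^{−1/2} cos(ρ_n t)` and the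
orthonormal cosine basis `f_n` satisfy `Ω_J ≤ C_Ω/J` with
`C_Ω = Mπ cosh(Mπ) √((3/2)(1 + (2π)²M² + (2+πM)²))`. -/
theorem stmt14 (M : ℝ) (hM : 0 < M)
    (lam α : ℕ → ℝ) (hα : ∀ n, 0 < α n)
    (ρ κ : ℕ → ℂ) (κt : ℕ → ℝ)
    (hρsq : ∀ n, (ρ n) ^ 2 = ((lam n : ℝ) : ℂ))
    (hρre : ∀ n, 0 ≤ (ρ n).re)
    (hρ : ∀ n : ℕ, ρ n = (n : ℂ) + κ n / ((n : ℂ) + 1))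
    (hαn : ∀ n : ℕ, 1 / α n = 2 / Real.pi + κt n / ((n : ℝ) + 1))
    (hκsum : Summable fun n => ‖κ n‖ ^ 2) (hκM : ∑' n, ‖κ n‖ ^ 2 ≤ M ^ 2)
    (hκtsum : Summable fun n => (κt n) ^ 2) (hκtM : ∑' n, (κt n) ^ 2 ≤ M ^ 2)
    -- the orthonormal cosine basis of `L²([0,π])`:
    (f : ℕ → ℝ → ℝ)
    (hf0 : ∀ t, f 0 t = (Real.sqrt Real.pi)⁻¹)
    (hf : ∀ n : ℕ, 1 ≤ n → ∀ t, f n t = Real.sqrt (2 / Real.pi) * Real.cos (n * t))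
    -- the perturbed family `g_n(t) = α_n^{−1/2} cos(ρ_n t)` (real-valued):
    (g : ℕ → ℝ → ℝ)
    (hg : ∀ n t, g n t = (Real.sqrt (α n))⁻¹ * (Complex.cos (ρ n * (t : ℂ))).re)
    (CΩ : ℝ)
    (hCΩ : CΩ = M * Real.pi * Real.cosh (M * Real.pi) *
      Real.sqrt ((3 / 2) * (1 + (2 * Real.pi) ^ 2 * M ^ 2 + (2 + Real.pi * M) ^ 2))) :
    ∀ J : ℕ, 1 ≤ J →
      (Summable fun n : ℕ =>
        ∫ t in Set.Icc (0 : ℝ) Real.pi, (g (n + (J + 1)) t - f (n + (J + 1)) t) ^ 2) ∧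
      Real.sqrt (∑' n : ℕ,
          ∫ t in Set.Icc (0 : ℝ) Real.pi, (g (n + (J + 1)) t - f (n + (J + 1)) t) ^ 2) ≤
        CΩ / J := by
  intro J hJ
  set P : ℝ := Real.pi with hP
  have hπ : 0 < P := Real.pi_pos
  set c : ℝ := Real.cosh (M * P) with hc
  have hc1 : (1:ℝ) ≤ c := Real.one_le_cosh _
  have hc0 : 0 < c := lt_of_lt_of_le one_pos hc1
  -- elementwise bounds on κ, κt
  have hκn : ∀ n, ‖κ n‖ ≤ M := by
    intro n
    have h1 : ‖κ n‖ ^ 2 ≤ M ^ 2 :=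
      le_trans (Summable.le_tsum hκsum n fun m _ => sq_nonneg _) hκM
    have := Real.sqrt_le_sqrt h1
    rwa [Real.sqrt_sq (norm_nonneg _), Real.sqrt_sq hM.le] at this
  have hκtn : ∀ n, |κt n| ≤ M := by
    intro n
    have h1 : (κt n) ^ 2 ≤ M ^ 2 :=
      le_trans (Summable.le_tsum hκtsum n fun m _ => sq_nonneg _) hκtM
    have h2 : |κt n| ^ 2 ≤ M ^ 2 := by rwa [sq_abs]
    have := Real.sqrt_le_sqrt h2
    rwa [Real.sqrt_sq (abs_nonneg _), Real.sqrt_sq hM.le] at this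
  -- the pointwise bound
  set E : ℕ → ℝ := fun n => (c / ((n:ℝ)+1)) *
    (Real.sqrt (P/2) * |κt n| + Real.sqrt (2/P) * P^2 * M * ‖κ n‖
      + Real.sqrt (2/P) * P * ‖κ n‖) with hE
  have hEnonneg : ∀ n, 0 ≤ E n := by
    intro n
    have h1 : (0:ℝ) ≤ (n:ℝ) + 1 := by positivity
    apply mul_nonneg (div_nonneg hc0.le h1)
    positivity
  have hpt : ∀ n : ℕ, 1 ≤ n → ∀ t ∈ Set.Icc (0:ℝ) P, |g n t - f n t| ≤ E n := by
    intro n hn t ht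
    obtain ⟨ht0, htP⟩ := ht
    set N : ℝ := (n:ℝ) with hN
    have hN0 : (0:ℝ) ≤ N := Nat.cast_nonneg n
    have hN1 : (0:ℝ) < N + 1 := by linarith
    set w : ℂ := (κ n / ((n:ℂ)+1)) * (t:ℂ) with hw
    have hsplit : (ρ n) * (t:ℂ) = ((N*t : ℝ) : ℂ) + w := by
      rw [hρ n, hw, hN]; push_cast; ring
    have hden : ‖((n:ℂ)+1)‖ = N + 1 := by
      have h1 : ((n:ℂ)+1) = ((N+1 : ℝ) : ℂ) := by rw [hN]; push_cast; ring
      rw [h1, Complex.norm_real, Real.norm_eq_abs, abs_of_pos hN1]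
    have hwnorm : ‖w‖ = ‖κ n‖ / (N+1) * t := by
      rw [hw, norm_mul, norm_div, hden, Complex.norm_real, Real.norm_eq_abs, abs_of_nonneg ht0]
    have hw0 : 0 ≤ ‖w‖ := norm_nonneg w
    have hw1 : ‖w‖ ≤ M * P := by
      rw [hwnorm]
      have hh : ‖κ n‖ / (N+1) ≤ M := le_trans (div_le_self (norm_nonneg _) (by linarith)) (hκn n)
      exact mul_le_mul hh htP ht0 hM.le
    have hw2 : ‖w‖ ≤ P * ‖κ n‖ / (N+1) := by
      rw [hwnorm]
      calc ‖κ n‖ / (N+1) * t ≤ ‖κ n‖ / (N+1) * P :=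
            mul_le_mul_of_nonneg_left htP (by positivity)
        _ = P * ‖κ n‖ / (N+1) := by ring
    have hcoshw : Real.cosh ‖w‖ ≤ c := by
      rw [hc]
      exact Real.cosh_le_cosh.2 (by
        rw [abs_of_nonneg hw0, abs_of_nonneg (by positivity : (0:ℝ) ≤ M * P)]; exact hw1)
    -- bound on |Re cos(ρ t)|
    have him : ((ρ n) * (t:ℂ)).im = w.im := by
      rw [hsplit]; simp
    have hA : |(Complex.cos ((ρ n) * (t:ℂ))).re| ≤ c := by
      apply re_cos_abs_le
      rw [him]
      have h1 : |w.im| ≤ ‖w‖ := by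
        exact Complex.abs_im_le_norm w
      exact h1.trans hw1
    -- bound on |Re cos w − 1| and |Re sin w|
    have hB : |(Complex.cos w).re - 1| ≤ (P * ‖κ n‖ / (N+1)) * (M * P) * c := by
      refine (re_cos_sub_one_abs_le w).trans ?_
      have h1 : ‖w‖ ^ 2 * Real.cosh ‖w‖ ≤ (P * ‖κ n‖ / (N+1)) * (M*P) * Real.cosh ‖w‖ := by
        apply mul_le_mul_of_nonneg_right ?_ (Real.cosh_pos _).le
        rw [pow_two]
        exact mul_le_mul hw2 hw1 hw0 (by positivity)
      refine h1.trans ?_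
      apply mul_le_mul_of_nonneg_left hcoshw (by positivity)
    have hC : |(Complex.sin w).re| ≤ (P * ‖κ n‖ / (N+1)) * c := by
      refine (re_sin_abs_le w).trans ?_
      exact mul_le_mul hw2 hcoshw (Real.cosh_pos _).le (by positivity)
    -- decomposition identities
    have hcosid : (Complex.cos ((ρ n) * (t:ℂ))).re
        = Real.cos (N*t) * (Complex.cos w).re - Real.sin (N*t) * (Complex.sin w).re := by
      rw [hsplit, Complex.cos_add]
      simp only [← Complex.ofReal_mul, Complex.sub_re, Complex.mul_re,
        Complex.cos_ofReal_re, Complex.sin_ofReal_re, Complex.cos_ofReal_im,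
        Complex.sin_ofReal_im, zero_mul, mul_zero, sub_zero]
    set u : ℝ := (Real.sqrt (α n))⁻¹ with hu
    set v : ℝ := Real.sqrt (2/P) with hv
    have hv0 : 0 < v := Real.sqrt_pos.2 (by positivity)
    have hu0 : 0 ≤ u := inv_nonneg.2 (Real.sqrt_nonneg _)
    have hu2 : u^2 = 1 / α n := by
      rw [hu, inv_pow, Real.sq_sqrt (hα n).le, one_div]
    have hv2 : v^2 = 2/P := Real.sq_sqrt (by positivity)
    have hdiff : u^2 - v^2 = κt n / (N+1) := by
      rw [hu2, hv2, hαn n, hN]; ring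
    have huv : |u - v| ≤ Real.sqrt (P/2) * |κt n| / (N+1) := by
      have habs : |u - v| * (u + v) = |κt n| / (N+1) := by
        have h1 : (u - v) * (u + v) = κt n / (N + 1) := by rw [← hdiff]; ring
        have h2 : |(u - v) * (u + v)| = |u - v| * (u + v) := by
          rw [abs_mul, abs_of_pos (show (0:ℝ) < u + v by linarith)]
        rw [← h2, h1, abs_div, abs_of_pos hN1]
      have hle : |u - v| * v ≤ |κt n| / (N+1) := by
        rw [← habs]
        exact mul_le_mul_of_nonneg_left (by linarith) (abs_nonneg _)
      have hvinv : v⁻¹ = Real.sqrt (P/2) := by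
        rw [hv, ← Real.sqrt_inv, inv_div]
      have h7 : |u - v| = |u - v| * v * v⁻¹ := by field_simp
      rw [h7]
      calc |u - v| * v * v⁻¹ ≤ (|κt n| / (N+1)) * v⁻¹ :=
            mul_le_mul_of_nonneg_right hle (inv_nonneg.2 hv0.le)
        _ = Real.sqrt (P/2) * |κt n| / (N+1) := by rw [hvinv]; ring
    -- main decomposition
    have hgf : g n t - f n t = (u - v) * (Complex.cos ((ρ n) * (t:ℂ))).re
        + v * (Real.cos (N*t) * ((Complex.cos w).re - 1) - Real.sin (N*t) * (Complex.sin w).re) := by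
      rw [hg n t, hf n hn t, hcosid, hu, hv, hN]
      ring
    have h5 : |g n t - f n t| ≤ |u - v| * |(Complex.cos ((ρ n) * (t:ℂ))).re|
        + v * (|(Complex.cos w).re - 1| + |(Complex.sin w).re|) := by
      rw [hgf]
      refine (abs_add_le _ _).trans ?_
      rw [abs_mul, abs_mul, abs_of_pos hv0]
      have h6 : |Real.cos (N*t) * ((Complex.cos w).re - 1) - Real.sin (N*t) * (Complex.sin w).re|
          ≤ |(Complex.cos w).re - 1| + |(Complex.sin w).re| := by
        refine (abs_sub _ _).trans ?_
        rw [abs_mul, abs_mul]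
        have hcos1 : |Real.cos (N*t)| ≤ 1 := Real.abs_cos_le_one _
        have hsin1 : |Real.sin (N*t)| ≤ 1 := Real.abs_sin_le_one _
        have e1 := mul_le_mul_of_nonneg_right hcos1 (abs_nonneg ((Complex.cos w).re - 1))
        have e2 := mul_le_mul_of_nonneg_right hsin1 (abs_nonneg (Complex.sin w).re)
        simpa using add_le_add e1 e2
      exact add_le_add le_rfl (mul_le_mul_of_nonneg_left h6 hv0.le)
    refine h5.trans ?_
    have hstep : |u - v| * |(Complex.cos ((ρ n) * (t:ℂ))).re|
        + v * (|(Complex.cos w).re - 1| + |(Complex.sin w).re|)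
        ≤ (Real.sqrt (P/2) * |κt n| / (N+1)) * c
          + v * ((P * ‖κ n‖ / (N+1)) * (M*P) * c + (P * ‖κ n‖ / (N+1)) * c) := by
      have e1 := mul_le_mul huv hA (abs_nonneg _) (by positivity)
      have e2 := mul_le_mul_of_nonneg_left (add_le_add hB hC) hv0.le
      linarith
    refine hstep.trans ?_
    have hEn : E n = (c / (N+1)) *
        (Real.sqrt (P/2) * |κt n| + Real.sqrt (2/P) * P^2 * M * ‖κ n‖
          + Real.sqrt (2/P) * P * ‖κ n‖) := rfl
    rw [hEn]
    exact le_of_eq (by rw [hv]; ring)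
  -- integral bound
  set D : ℕ → ℝ := fun n => (c^2 / ((n:ℝ)+1)^2) *
    ((3/2)*P^2*(κt n)^2 + (6*P^4*M^2 + 6*P^2)*‖κ n‖^2) with hD
  have hDnonneg : ∀ n, 0 ≤ D n := by
    intro n
    have hDn : D n = (c^2 / ((n:ℝ)+1)^2) *
        ((3/2)*P^2*(κt n)^2 + (6*P^4*M^2 + 6*P^2)*‖κ n‖^2) := rfl
    rw [hDn]
    positivity
  have hInt : ∀ n : ℕ, 1 ≤ n →
      IntegrableOn (fun t => (g n t - f n t)^2) (Set.Icc 0 P) volume ∧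
      ∫ t in Set.Icc (0:ℝ) P, (g n t - f n t)^2 ≤ D n := by
    intro n hn
    have hgc : Continuous (g n) := by
      have he : g n = fun t : ℝ => (Real.sqrt (α n))⁻¹ * (Complex.cos (ρ n * (t:ℂ))).re :=
        funext (hg n)
      rw [he]
      exact continuous_const.mul (Complex.continuous_re.comp
        (Complex.continuous_cos.comp (continuous_const.mul Complex.continuous_ofReal)))
    have hfc : Continuous (f n) := by
      have he : f n = fun t : ℝ => Real.sqrt (2 / Real.pi) * Real.cos ((n:ℝ) * t) :=
        funext (hf n hn)
      rw [he]
      exact continuous_const.mul (Real.continuous_cos.comp (continuous_const.mul continuous_id))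
    have hsqc : Continuous fun t => (g n t - f n t)^2 := (hgc.sub hfc).pow 2
    have hint1 : IntegrableOn (fun t => (g n t - f n t)^2) (Set.Icc 0 P) volume :=
      hsqc.integrableOn_Icc
    refine ⟨hint1, ?_⟩
    have hint2 : IntegrableOn (fun _ : ℝ => (E n)^2) (Set.Icc 0 P) volume :=
      integrableOn_const (by rw [Real.volume_Icc]; exact ENNReal.ofReal_ne_top)
    have hmono : ∫ t in Set.Icc (0:ℝ) P, (g n t - f n t)^2
        ≤ ∫ _ in Set.Icc (0:ℝ) P, (E n)^2 := by
      apply setIntegral_mono_on hint1 hint2 measurableSet_Icc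
      intro t ht
      have h1 := hpt n hn t ht
      calc (g n t - f n t)^2 = |g n t - f n t|^2 := (sq_abs _).symm
        _ ≤ (E n)^2 := pow_le_pow_left₀ (abs_nonneg _) h1 2
    have hconst : ∫ _ in Set.Icc (0:ℝ) P, (E n)^2 = P * (E n)^2 := by
      rw [setIntegral_const, Real.volume_real_Icc_of_le hπ.le, smul_eq_mul,
        sub_zero]
    refine hmono.trans ?_
    rw [hconst]
    -- P * (E n)^2 ≤ D n
    set x := Real.sqrt (P/2) * |κt n| with hx
    set y := Real.sqrt (2/P) * P^2 * M * ‖κ n‖ with hy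
    set z := Real.sqrt (2/P) * P * ‖κ n‖ with hz
    have hx2 : x^2 = (P/2) * (κt n)^2 := by
      rw [hx, mul_pow, Real.sq_sqrt (by positivity : (0:ℝ) ≤ P/2), sq_abs]
    have hy2 : y^2 = (2/P) * P^4 * M^2 * ‖κ n‖^2 := by
      rw [hy]
      have : (Real.sqrt (2/P) * P^2 * M * ‖κ n‖)^2
          = (Real.sqrt (2/P))^2 * (P^2)^2 * M^2 * ‖κ n‖^2 := by ring
      rw [this, Real.sq_sqrt (by positivity : (0:ℝ) ≤ 2/P)]
      ring
    have hz2 : z^2 = (2/P) * P^2 * ‖κ n‖^2 := by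
      rw [hz]
      have : (Real.sqrt (2/P) * P * ‖κ n‖)^2 = (Real.sqrt (2/P))^2 * P^2 * ‖κ n‖^2 := by ring
      rw [this, Real.sq_sqrt (by positivity : (0:ℝ) ≤ 2/P)]
    have hsum3 : (x+y+z)^2 ≤ 3*(x^2+y^2+z^2) := by
      nlinarith [sq_nonneg (x-y), sq_nonneg (x-z), sq_nonneg (y-z)]
    have hEeq : E n = (c / ((n:ℝ)+1)) * (x+y+z) := rfl
    have hNpos : (0:ℝ) < ((n:ℝ)+1)^2 := by positivity
    have hNne : ((n:ℝ)+1) ≠ 0 := by positivity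
    calc P * (E n)^2 = P * (c^2/((n:ℝ)+1)^2) * (x+y+z)^2 := by
          rw [hEeq]; field_simp
      _ ≤ P * (c^2/((n:ℝ)+1)^2) * (3*(x^2+y^2+z^2)) := by
          apply mul_le_mul_of_nonneg_left hsum3 (by positivity)
      _ = D n := by
          have hDn : D n = (c^2 / ((n:ℝ)+1)^2) *
              ((3/2)*P^2*(κt n)^2 + (6*P^4*M^2 + 6*P^2)*‖κ n‖^2) := rfl
          rw [hx2, hy2, hz2, hDn]
          have hPne : P ≠ 0 := ne_of_gt hπ
          field_simp
          ring
  -- summability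
  have hDsum : Summable D := by
    have hD' : Summable (fun n => (c^2 * ((3/2)*P^2)) * (κt n)^2
        + (c^2 * (6*P^4*M^2 + 6*P^2)) * ‖κ n‖^2) :=
      (hκtsum.mul_left _).add (hκsum.mul_left _)
    apply Summable.of_nonneg_of_le hDnonneg ?_ hD'
    intro n
    have hDn : D n = (c^2 / ((n:ℝ)+1)^2) *
        ((3/2)*P^2*(κt n)^2 + (6*P^4*M^2 + 6*P^2)*‖κ n‖^2) := rfl
    rw [hDn]
    have h1 : (1:ℝ) ≤ ((n:ℝ)+1)^2 := by nlinarith [Nat.cast_nonneg (α := ℝ) n]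
    have h2 : c^2 / ((n:ℝ)+1)^2 ≤ c^2 := by
      rw [div_le_iff₀ (by positivity)]
      nlinarith [sq_nonneg c]
    have h3 : (0:ℝ) ≤ (3/2)*P^2*(κt n)^2 + (6*P^4*M^2 + 6*P^2)*‖κ n‖^2 := by positivity
    calc (c^2 / ((n:ℝ)+1)^2) * ((3/2)*P^2*(κt n)^2 + (6*P^4*M^2 + 6*P^2)*‖κ n‖^2)
        ≤ c^2 * ((3/2)*P^2*(κt n)^2 + (6*P^4*M^2 + 6*P^2)*‖κ n‖^2) :=
          mul_le_mul_of_nonneg_right h2 h3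
      _ = (c^2 * ((3/2)*P^2)) * (κt n)^2 + (c^2 * (6*P^4*M^2 + 6*P^2)) * ‖κ n‖^2 := by ring
  have hDshsum : Summable (fun m => D (m + (J+1))) := (summable_nat_add_iff (J+1)).2 hDsum
  have hFnonneg : ∀ m : ℕ, (0:ℝ) ≤
      ∫ t in Set.Icc (0:ℝ) Real.pi, (g (m + (J + 1)) t - f (m + (J + 1)) t) ^ 2 := by
    intro m
    exact integral_nonneg fun t => sq_nonneg _
  have hFle : ∀ m : ℕ,
      (∫ t in Set.Icc (0:ℝ) Real.pi, (g (m + (J + 1)) t - f (m + (J + 1)) t) ^ 2)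
        ≤ D (m + (J+1)) := by
    intro m
    exact (hInt (m + (J+1)) (by omega)).2
  have hFsum : Summable fun m : ℕ =>
      ∫ t in Set.Icc (0:ℝ) Real.pi, (g (m + (J + 1)) t - f (m + (J + 1)) t) ^ 2 :=
    Summable.of_nonneg_of_le hFnonneg hFle hDshsum
  refine ⟨hFsum, ?_⟩
  -- tail sums of κ, κt
  have hT1sum : Summable (fun m => (κt (m + (J+1)))^2) := (summable_nat_add_iff (J+1)).2 hκtsum
  have hT2sum : Summable (fun m => ‖κ (m + (J+1))‖^2) := (summable_nat_add_iff (J+1)).2 hκsum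
  have hT1 : ∑' m, (κt (m + (J+1)))^2 ≤ M^2 := by
    have h := hκtsum.sum_add_tsum_nat_add (J+1)
    have hpos : 0 ≤ ∑ i ∈ Finset.range (J+1), (κt i)^2 :=
      Finset.sum_nonneg fun _ _ => sq_nonneg _
    linarith
  have hT2 : ∑' m, ‖κ (m + (J+1))‖^2 ≤ M^2 := by
    have h := hκsum.sum_add_tsum_nat_add (J+1)
    have hpos : 0 ≤ ∑ i ∈ Finset.range (J+1), ‖κ i‖^2 :=
      Finset.sum_nonneg fun _ _ => sq_nonneg _
    linarith
  have hJpos : (0:ℝ) < (J:ℝ) := by exact_mod_cast Nat.pos_of_ne_zero (by omega)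
  set q : ℝ := c^2 / ((J:ℝ)+2)^2 with hq
  have hq0 : 0 ≤ q := by positivity
  -- bound each shifted D term
  have hDle2 : ∀ m : ℕ, D (m + (J+1)) ≤
      q * ((3/2)*P^2*(κt (m + (J+1)))^2 + (6*P^4*M^2 + 6*P^2)*‖κ (m + (J+1))‖^2) := by
    intro m
    have hDn : D (m + (J+1)) = (c^2 / (((m + (J+1) : ℕ) : ℝ)+1)^2) *
        ((3/2)*P^2*(κt (m + (J+1)))^2 + (6*P^4*M^2 + 6*P^2)*‖κ (m + (J+1))‖^2) := rfl
    rw [hDn, hq]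
    have hd1 : ((J:ℝ)+2) ≤ ((m + (J+1) : ℕ) : ℝ) + 1 := by push_cast; linarith [Nat.cast_nonneg (α := ℝ) m]
    have hd0 : (0:ℝ) < ((J:ℝ)+2) := by linarith
    have h2 : c^2 / (((m + (J+1) : ℕ) : ℝ)+1)^2 ≤ c^2 / ((J:ℝ)+2)^2 := by
      apply div_le_div_of_nonneg_left (sq_nonneg c) (by positivity)
      nlinarith
    have h3 : (0:ℝ) ≤ (3/2)*P^2*(κt (m + (J+1)))^2
        + (6*P^4*M^2 + 6*P^2)*‖κ (m + (J+1))‖^2 := by positivity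
    exact mul_le_mul_of_nonneg_right h2 h3
  have hRHSsum : Summable (fun m => q * ((3/2)*P^2*(κt (m + (J+1)))^2
      + (6*P^4*M^2 + 6*P^2)*‖κ (m + (J+1))‖^2)) :=
    ((hT1sum.mul_left _).add (hT2sum.mul_left _)).mul_left q
  have htsum2 : ∑' m, D (m + (J+1)) ≤ q * ((3/2)*P^2*M^2 + (6*P^4*M^2 + 6*P^2)*M^2) := by
    have h1 := Summable.tsum_le_tsum hDle2 hDshsum hRHSsum
    refine h1.trans ?_
    rw [tsum_mul_left]
    apply mul_le_mul_of_nonneg_left ?_ hq0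
    rw [Summable.tsum_add (hT1sum.mul_left _) (hT2sum.mul_left _), tsum_mul_left, tsum_mul_left]
    have e1 : (3/2)*P^2 * ∑' m, (κt (m + (J+1)))^2 ≤ (3/2)*P^2*M^2 :=
      mul_le_mul_of_nonneg_left hT1 (by positivity)
    have e2 : (6*P^4*M^2 + 6*P^2) * ∑' m, ‖κ (m + (J+1))‖^2 ≤ (6*P^4*M^2 + 6*P^2)*M^2 :=
      mul_le_mul_of_nonneg_left hT2 (by positivity)
    linarith
  have htsum1 : (∑' m : ℕ, ∫ t in Set.Icc (0:ℝ) Real.pi,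
      (g (m + (J + 1)) t - f (m + (J + 1)) t) ^ 2) ≤ ∑' m, D (m + (J+1)) :=
    Summable.tsum_le_tsum hFle hFsum hDshsum
  -- final numeric inequality
  have hCΩ0 : 0 ≤ CΩ := by
    rw [hCΩ]
    positivity
  have hCΩsq : CΩ^2 = (M * P * c)^2 * ((3/2) * (1 + (2*P)^2*M^2 + (2 + P*M)^2)) := by
    rw [hCΩ, mul_pow, Real.sq_sqrt (by positivity)]
  have hfinal : q * ((3/2)*P^2*M^2 + (6*P^4*M^2 + 6*P^2)*M^2) ≤ (CΩ / J)^2 := by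
    rw [div_pow, hq, hCΩsq]
    rw [div_mul_eq_mul_div]
    apply div_le_div₀ (by positivity) ?_ (by positivity) ?_
    · have hexp : (M*P*c)^2 * ((3/2) * (1 + (2*P)^2*M^2 + (2 + P*M)^2))
          - c^2 * ((3/2)*P^2*M^2 + (6*P^4*M^2 + 6*P^2)*M^2)
          = c^2*P^2*M^2*(6*(P*M) + (3/2)*(P*M)^2) := by ring
      nlinarith [mul_nonneg (mul_nonneg (mul_nonneg (sq_nonneg c) (sq_nonneg P))
        (sq_nonneg M) : (0:ℝ) ≤ c^2*P^2*M^2)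
        (by positivity : (0:ℝ) ≤ 6*(P*M) + (3/2)*(P*M)^2)]
    · nlinarith [hJpos]
  have hsumle : (∑' m : ℕ, ∫ t in Set.Icc (0:ℝ) Real.pi,
      (g (m + (J + 1)) t - f (m + (J + 1)) t) ^ 2) ≤ (CΩ / J)^2 :=
    le_trans htsum1 (le_trans htsum2 hfinal)
  calc Real.sqrt (∑' m : ℕ, ∫ t in Set.Icc (0:ℝ) Real.pi,
        (g (m + (J + 1)) t - f (m + (J + 1)) t) ^ 2)
      ≤ Real.sqrt ((CΩ / J)^2) := Real.sqrt_le_sqrt hsumle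
    _ = CΩ / J := Real.sqrt_sq (by positivity)
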